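/- Let G be a finite group, R a commutative ring, and F a family of subgroups of G closed under conjugation and under taking subgroups. An RG-module M is F-projective if and only if M is a direct summand of an RG-module of the form N ⊗_R RX, where N is some RG-module and X is a G-set all of whose isotropy subgroups belong to F. -/

import Mathlib

open CategoryTheory MonoidalCategory

/-- A surjection `π : B → C` of `RG`-modules (`R`-linear `G`-representations) is
`H`-split if, after restriction to `H`, the corresponding short exact sequence splits,
i.e. `π` admits an `RH`-linear section: an `R`-linear section commuting with the
action of every `h ∈ H`. -/
def IsHSplitSurj (R : Type) [CommRing R] (G : Type) [Group G] (H : Subgroup G)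
    {B C : Rep.{0} R G} (π : B ⟶ C) : Prop :=
  ∃ s : C.V →ₗ[R] B.V, (∀ c, π.hom (s c) = c) ∧
    ∀ h ∈ H, ∀ c, s (C.ρ h c) = B.ρ h (s c)

/-- The short exact sequence `0 → ker f → P → im f → 0` of `RG`-modules is `H`-split:
the surjection of `P` onto the image of `f` admits an `RH`-linear section. -/
def IsHSplitOntoRange (R : Type) [CommRing R] (G : Type) [Group G] (H : Subgroup G)
    {P Q : Rep.{0} R G} (f : P ⟶ Q) : Prop :=
  ∃ s : LinearMap.range f.hom.toLinearMap →ₗ[R] P.V,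
    (∀ y : LinearMap.range f.hom.toLinearMap, f.hom (s y) = y) ∧
    ∀ h ∈ H, ∀ y : LinearMap.range f.hom.toLinearMap,
      s ⟨Q.ρ h y.1, by
        obtain ⟨x, hx⟩ := y.2
        exact ⟨P.ρ h x, by rw [← hx]; exact Rep.hom_comm_apply f h x⟩⟩ = P.ρ h (s y)

/-- An `RG`-module `P` is `F`-projective if for every `F`-split short exact sequence
`0 → A → B → C → 0` of `RG`-modules, every map `P → C` lifts to a map `P → B`. -/
def IsFProjective (R : Type) [CommRing R] (G : Type) [Group G] (F : Set (Subgroup G))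
    (P : Rep.{0} R G) : Prop :=
  ∀ (A B C : Rep.{0} R G) (i : A ⟶ B) (p : B ⟶ C),
    Function.Injective i.hom → Function.Surjective p.hom →
    LinearMap.range i.hom.toLinearMap = LinearMap.ker p.hom.toLinearMap →
    (∀ H ∈ F, IsHSplitSurj R G H p) →
    ∀ α : P ⟶ C, ∃ β : P ⟶ B, β ≫ p = α


section Helpers
variable {R : Type} [CommRing R] {G : Type} [Group G]



/-- ext lemma for maps out of M ⊗ (Y →₀ R) -/
theorem tmul_single_ext {M P : Type} [AddCommGroup M] [Module R M] [AddCommGroup P] [Module R P]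
    {Y : Type} (f g : TensorProduct R M (MonoidAlgebra R Y) →ₗ[R] P)
    (h : ∀ m y, f (m ⊗ₜ[R] MonoidAlgebra.single y 1) = g (m ⊗ₜ[R] MonoidAlgebra.single y 1)) :
    f = g := by
  apply TensorProduct.ext
  apply LinearMap.ext; intro m
  apply MonoidAlgebra.lhom_ext'; intro y
  apply LinearMap.ext; intro r
  have hs : (MonoidAlgebra.single y r : MonoidAlgebra R Y) = r • MonoidAlgebra.single y 1 := by
    simp [MonoidAlgebra.smul_single']
  simp only [LinearMap.comp_apply, MonoidAlgebra.lsingle_apply, LinearMap.compr₂_apply,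
    TensorProduct.mk_apply, hs, TensorProduct.tmul_smul, map_smul]
  exact congrArg (r • ·) (h m y)

theorem rho_rho (W : Rep R G) (g₁ g₂ : G) (v : W.V) :
    W.ρ g₁ (W.ρ g₂ v) = W.ρ (g₁ * g₂) v := by
  rw [map_mul]; rfl

theorem rho_inv_self (W : Rep R G) (g : G) (v : W.V) : W.ρ g (W.ρ g⁻¹ v) = v := by
  rw [rho_rho, mul_inv_cancel, map_one, Module.End.one_apply]

/-- the lifted map N ⊗ R[X] →ₗ B from a family of maps -/
noncomputable def liftMap (N : Type) [AddCommGroup N] [Module R N] {B : Type} [AddCommGroup B]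
    [Module R B] {X : Type} (Ψ : X → (N →ₗ[R] B)) :
    TensorProduct R N (MonoidAlgebra R X) →ₗ[R] B :=
  TensorProduct.lift (LinearMap.flip ((Finsupp.lsum R fun x =>
    LinearMap.toSpanSingleton R (N →ₗ[R] B) (Ψ x)) ∘ₗ
      (MonoidAlgebra.coeffLinearEquiv R : MonoidAlgebra R X ≃ₗ[R] X →₀ R).toLinearMap))

@[simp] theorem liftMap_tmul_single (N : Type) [AddCommGroup N] [Module R N] {B : Type}
    [AddCommGroup B] [Module R B] {X : Type} (Ψ : X → (N →ₗ[R] B)) (n : N) (x : X) (r : R) :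
    liftMap N Ψ (n ⊗ₜ[R] MonoidAlgebra.single x r) = r • Ψ x n := by
  simp [liftMap, TensorProduct.lift.tmul]

variable {G : Type} [Group G]

def FSigma (F : Set (Subgroup G)) : Type := Σ H : F, G ⧸ (H : Subgroup G)

instance (F : Set (Subgroup G)) : SMul G (FSigma F) := ⟨fun g x => ⟨x.1, g • x.2⟩⟩

theorem FSigma.smul_def (F : Set (Subgroup G)) (g : G) (x : FSigma F) :
    g • x = ⟨x.1, g • x.2⟩ := rfl

instance (F : Set (Subgroup G)) : MulAction G (FSigma F) where
  one_smul x := by rw [FSigma.smul_def, one_smul]; rfl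
  mul_smul g h x := by simp only [FSigma.smul_def, mul_smul]; rfl

theorem FSigma.stab (F : Set (Subgroup G))
    (hconj : ∀ H ∈ F, ∀ g : G, Subgroup.map (MulAut.conj g).toMonoidHom H ∈ F)
    (x : FSigma F) : MulAction.stabilizer G x ∈ F := by
  obtain ⟨⟨H, hH⟩, q⟩ := x
  have h1 : MulAction.stabilizer G (⟨⟨H, hH⟩, q⟩ : FSigma F) = MulAction.stabilizer G q := by
    ext g
    rw [MulAction.mem_stabilizer_iff, MulAction.mem_stabilizer_iff]
    exact (show ∀ q' : G ⧸ (H : Subgroup G), (⟨⟨H, hH⟩, q'⟩ : FSigma F) = ⟨⟨H, hH⟩, q⟩ ↔ q' = q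
      from fun q' => by rw [Sigma.mk.inj_iff]; simp) (g • q)
  refine (congrArg (· ∈ F) h1).mpr ?_
  induction q using QuotientGroup.induction_on with
  | H g =>
    have h2 : (g : G ⧸ H) = g • ((1 : G) : G ⧸ H) := by simp
    rw [h2, MulAction.stabilizer_smul_eq_stabilizer_map_conj, MulAction.stabilizer_quotient]
    exact hconj H hH g

theorem ker_mem_stable {P Q : Rep R G} (f : P ⟶ Q) (g : G) :
    ∀ x ∈ LinearMap.ker f.hom.toLinearMap, P.ρ g x ∈ LinearMap.ker f.hom.toLinearMap :=
    fun x hx => by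
  rw [LinearMap.mem_ker] at *
  have h2 : f.hom (P.ρ g x) = Q.ρ g (f.hom x) := Rep.hom_comm_apply f g x
  exact h2.trans (by rw [← Representation.IntertwiningMap.toLinearMap_apply (f := f.hom) (v := x), hx, map_zero])

noncomputable def kerRep {P Q : Rep R G} (f : P ⟶ Q) : Rep R G :=
  Rep.of (X := LinearMap.ker f.hom.toLinearMap)
    { toFun := fun g => (P.ρ g).restrict (ker_mem_stable f g)
      map_one' := by
        apply LinearMap.ext; intro x
        apply Subtype.ext
        show P.ρ 1 x.1 = x.1
        rw [map_one]; rfl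
      map_mul' := fun g h => by
        apply LinearMap.ext; intro x
        apply Subtype.ext
        show P.ρ (g * h) x.1 = P.ρ g ((P.ρ h).restrict (ker_mem_stable f h) x).1
        rw [map_mul]; rfl }

noncomputable def kerRepι {P Q : Rep R G} (f : P ⟶ Q) : kerRep f ⟶ P :=
  Rep.ofHom ⟨(LinearMap.ker f.hom.toLinearMap).subtype, fun g => by
    apply LinearMap.ext; intro x
    rfl⟩

theorem kerRepι_injective {P Q : Rep R G} (f : P ⟶ Q) : Function.Injective (kerRepι f).hom :=
  Subtype.val_injective

theorem kerRepι_range {P Q : Rep R G} (f : P ⟶ Q) :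
    LinearMap.range (kerRepι f).hom.toLinearMap = LinearMap.ker f.hom.toLinearMap :=
  Submodule.range_subtype _
theorem tensor_rho_single (N : Rep R G) {X : Type} [MulAction G X] (g : G) (n : N) (x : X)
    (r : R) : (N ⊗ Rep.ofMulAction R G X).ρ g (n ⊗ₜ[R] MonoidAlgebra.single x r) =
      N.ρ g n ⊗ₜ[R] MonoidAlgebra.single (g • x) r := by
  have : (N ⊗ Rep.ofMulAction R G X).ρ g (n ⊗ₜ[R] MonoidAlgebra.single x r) =
      N.ρ g n ⊗ₜ[R] (Rep.ofMulAction R G X).ρ g (MonoidAlgebra.single x r) := by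
    exact TensorProduct.map_tmul _ _ _ _
  rw [this]
  congr 1
  exact Representation.ofMulAction_single g x r

section Reverse
variable {B C : Rep R G} {X : Type} [MulAction G X]

noncomputable def TT (sec : Quotient (MulAction.orbitRel G X) → (C.V →ₗ[R] B.V))
    (g0 : X → G) (x : X) : C.V →ₗ[R] B.V :=
  (B.ρ (g0 x)) ∘ₗ (sec (Quotient.mk (MulAction.orbitRel G X) x)) ∘ₗ (C.ρ (g0 x)⁻¹)

theorem TT_section (p : B ⟶ C) (sec : Quotient (MulAction.orbitRel G X) → (C.V →ₗ[R] B.V))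
    (g0 : X → G) (hsec1 : ∀ q c, p.hom (sec q c) = c) (x : X) (c : C.V) :
    p.hom (TT sec g0 x c) = c := by
  simp only [TT, LinearMap.comp_apply]
  exact (Rep.hom_comm_apply p (g0 x) _).trans
    ((congrArg (C.ρ (g0 x)) (hsec1 _ _)).trans (rho_inv_self C (g0 x) c))

theorem TT_equivariant (sec : Quotient (MulAction.orbitRel G X) → (C.V →ₗ[R] B.V))
    (g0 : X → G)
    (hsec2 : ∀ q, ∀ h ∈ MulAction.stabilizer G (Quotient.out q), ∀ c,
      sec q (C.ρ h c) = B.ρ h (sec q c))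
    (hg0 : ∀ x : X, g0 x • (Quotient.mk (MulAction.orbitRel G X) x).out = x)
    (g : G) (x : X) (c : C.V) : TT sec g0 (g • x) (C.ρ g c) = B.ρ g (TT sec g0 x c) := by
  have hq : Quotient.mk (MulAction.orbitRel G X) (g • x) = Quotient.mk (MulAction.orbitRel G X) x :=
    Quotient.sound (MulAction.mem_orbit x g)
  simp only [TT, LinearMap.comp_apply]
  rw [hq]
  have hk : g0 (g • x) • (Quotient.mk (MulAction.orbitRel G X) x).out = g • x := by
    have h0 := hg0 (g • x); rw [hq] at h0; exact h0
  set k := g0 (g • x) with hkdef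
  set h := (g * g0 x)⁻¹ * k with hh
  have hx0 : (g0 x)⁻¹ • x = (Quotient.mk (MulAction.orbitRel G X) x).out := by
    rw [inv_smul_eq_iff]; exact (hg0 x).symm
  have hmem : h ∈ MulAction.stabilizer G (Quotient.mk (MulAction.orbitRel G X) x).out := by
    rw [MulAction.mem_stabilizer_iff, hh, mul_smul, hk, mul_inv_rev, mul_smul, inv_smul_smul]
    exact hx0
  have e1 : C.ρ k⁻¹ (C.ρ g c) = C.ρ h⁻¹ (C.ρ (g0 x)⁻¹ c) := by
    rw [rho_rho, rho_rho]
    congr 1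
    rw [hh]
    group
  have e3 : k * h⁻¹ = g * g0 x := by rw [hh]; group
  calc B.ρ k (sec (Quotient.mk (MulAction.orbitRel G X) x) (C.ρ k⁻¹ (C.ρ g c)))
      = B.ρ k (B.ρ h⁻¹ (sec (Quotient.mk (MulAction.orbitRel G X) x) (C.ρ (g0 x)⁻¹ c))) :=
        congrArg (B.ρ k) ((congrArg (sec _) e1).trans
          (hsec2 _ h⁻¹ ((MulAction.stabilizer G _).inv_mem hmem) _))
    _ = B.ρ (k * h⁻¹) (sec (Quotient.mk (MulAction.orbitRel G X) x) (C.ρ (g0 x)⁻¹ c)) :=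
        rho_rho B k h⁻¹ _
    _ = B.ρ (g * g0 x) (sec (Quotient.mk (MulAction.orbitRel G X) x) (C.ρ (g0 x)⁻¹ c)) := by
        rw [e3]
    _ = B.ρ g (B.ρ (g0 x) (sec (Quotient.mk (MulAction.orbitRel G X) x) (C.ρ (g0 x)⁻¹ c))) :=
        (rho_rho B g (g0 x) _).symm

theorem exists_lift (N : Rep R G) (γ : (N ⊗ Rep.ofMulAction R G X) ⟶ C) (p : B ⟶ C)
    (T : X → (C.V →ₗ[R] B.V))
    (hT1 : ∀ x c, p.hom (T x c) = c)
    (hT2 : ∀ (g : G) (x : X) (c : C.V), T (g • x) (C.ρ g c) = B.ρ g (T x c)) :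
    ∃ β : (N ⊗ Rep.ofMulAction R G X) ⟶ B, β ≫ p = γ := by
  set Ψ : X → (N.V →ₗ[R] B.V) := fun x =>
    (T x) ∘ₗ γ.hom.toLinearMap ∘ₗ
      ((TensorProduct.mk R N.V (MonoidAlgebra R X)).flip (MonoidAlgebra.single x 1)) with hΨ
  have key : ∀ (g : G) (n : N.V) (x : X),
      liftMap N.V Ψ ((N ⊗ Rep.ofMulAction R G X).ρ g (n ⊗ₜ[R] MonoidAlgebra.single x 1)) =
        B.ρ g (liftMap N.V Ψ (n ⊗ₜ[R] MonoidAlgebra.single x 1)) := by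
    intro g n x
    rw [tensor_rho_single, liftMap_tmul_single, liftMap_tmul_single, one_smul, one_smul]
    have hγ : γ.hom ((N ⊗ Rep.ofMulAction R G X).ρ g (n ⊗ₜ[R] MonoidAlgebra.single x 1)) =
        C.ρ g (γ.hom (n ⊗ₜ[R] MonoidAlgebra.single x 1)) := Rep.hom_comm_apply γ g _
    rw [tensor_rho_single] at hγ
    show T (g • x) (γ.hom ((N.ρ g n) ⊗ₜ[R] MonoidAlgebra.single (g • x) 1)) =
      B.ρ g (T x (γ.hom (n ⊗ₜ[R] MonoidAlgebra.single x 1)))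
    exact (congrArg (T (g • x)) hγ).trans (hT2 g x _)
  refine ⟨Rep.ofHom ⟨liftMap N.V Ψ, fun g => ?_⟩, ?_⟩
  · apply tmul_single_ext
    intro n x
    exact key g n x
  · apply Rep.hom_ext
    apply Representation.IntertwiningMap.ext
    apply tmul_single_ext
    intro n x
    show p.hom (liftMap N.V Ψ (n ⊗ₜ[R] MonoidAlgebra.single x 1)) = γ.hom (n ⊗ₜ[R] MonoidAlgebra.single x 1)
    rw [liftMap_tmul_single, one_smul]
    show p.hom (T x (γ.hom (n ⊗ₜ[R] MonoidAlgebra.single x 1))) = γ.hom (n ⊗ₜ[R] MonoidAlgebra.single x 1)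
    exact hT1 x _

end Reverse

section Forward
variable (F : Set (Subgroup G))

noncomputable def fwdPi (M : Rep R G) : (M ⊗ Rep.ofMulAction R G (FSigma F)) ⟶ M :=
  Rep.ofHom ⟨liftMap M.V (fun _ : FSigma F => LinearMap.id), fun g => by
    apply tmul_single_ext
    intro m x
    show liftMap M.V (fun _ : FSigma F => LinearMap.id)
        ((M ⊗ Rep.ofMulAction R G (FSigma F)).ρ g (m ⊗ₜ[R] MonoidAlgebra.single x 1)) =
      M.ρ g (liftMap M.V (fun _ : FSigma F => LinearMap.id) (m ⊗ₜ[R] MonoidAlgebra.single x 1))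
    rw [tensor_rho_single]
    simp⟩

theorem fwdPi_surj (M : Rep R G) (hbot : ⊥ ∈ F) : Function.Surjective (fwdPi F M).hom := by
  intro m
  refine ⟨m ⊗ₜ[R] MonoidAlgebra.single ⟨⟨⊥, hbot⟩, ((1 : G) : G ⧸ ((⊥ : Subgroup G) : Subgroup G))⟩ 1,
    ?_⟩
  show liftMap M.V (fun _ : FSigma F => LinearMap.id) (m ⊗ₜ[R] _) = m
  exact (liftMap_tmul_single _ _ _ _ _).trans (one_smul _ _)

theorem fwdPi_split (M : Rep R G) (H : Subgroup G) (hH : H ∈ F) :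
    ∃ s : M.V →ₗ[R] (M ⊗ Rep.ofMulAction R G (FSigma F)).V,
      (∀ c, (fwdPi F M).hom (s c) = c) ∧
      ∀ h ∈ H, ∀ c, s (M.ρ h c) = (M ⊗ Rep.ofMulAction R G (FSigma F)).ρ h (s c) := by
  refine ⟨(TensorProduct.mk R M.V (MonoidAlgebra R (FSigma F))).flip
    (MonoidAlgebra.single ⟨⟨H, hH⟩, ((1 : G) : G ⧸ (H : Subgroup G))⟩ 1), fun c => ?_, fun h hh c => ?_⟩
  · show liftMap M.V (fun _ : FSigma F => LinearMap.id) (c ⊗ₜ[R] _) = c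
    exact (liftMap_tmul_single _ _ _ _ _).trans (one_smul _ _)
  · show M.ρ h c ⊗ₜ[R] _ = (M ⊗ Rep.ofMulAction R G (FSigma F)).ρ h (c ⊗ₜ[R] _)
    refine Eq.trans ?_ (tensor_rho_single M h c _ 1).symm
    have hfix : h • (⟨⟨H, hH⟩, ((1 : G) : G ⧸ (H : Subgroup G))⟩ : FSigma F) =
        ⟨⟨H, hH⟩, ((1 : G) : G ⧸ (H : Subgroup G))⟩ := by
      refine (FSigma.smul_def F h _).trans ?_
      congr 1
      show h • ((1 : G) : G ⧸ (H : Subgroup G)) = ((1 : G) : G ⧸ (H : Subgroup G))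
      rw [MulAction.Quotient.smul_mk, QuotientGroup.eq]
      simpa using H.inv_mem hh
    exact congrArg (fun z => M.ρ h c ⊗ₜ[R] MonoidAlgebra.single z (1 : R)) hfix.symm

end Forward
end Helpers

/-- Let `G` be a finite group, `R` a commutative ring, and `F` a family
of subgroups of `G` closed under conjugation and under taking subgroups (in particular
containing the trivial subgroup).  An `RG`-module `M` is `F`-projective if and only if
`M` is a direct summand of an `RG`-module of the form `N ⊗ RX`, where `N` is some
`RG`-module and `X` is a `G`-set all of whose isotropy subgroups belong to `F`. -/
theorem fProjective_iff_directSummand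
    (G : Type) [Group G] [Finite G] (R : Type) [CommRing R]
    (F : Set (Subgroup G))
    (hconj : ∀ H ∈ F, ∀ g : G, Subgroup.map (MulAut.conj g).toMonoidHom H ∈ F)
    (hsub : ∀ H ∈ F, ∀ K : Subgroup G, K ≤ H → K ∈ F)
    (hbot : ⊥ ∈ F)
    (M : Rep R G) :
    IsFProjective R G F M ↔
      ∃ (N : Rep R G) (X : Type) (inst : MulAction G X),
        (∀ x : X, @MulAction.stabilizer G X _ inst x ∈ F) ∧
        ∃ (ι : M ⟶ N ⊗ @Rep.ofMulAction R G _ _ X inst)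
          (π : N ⊗ @Rep.ofMulAction R G _ _ X inst ⟶ M), ι ≫ π = 𝟙 M := by
  constructor
  · intro hM
    obtain ⟨β, hβ⟩ := hM (kerRep (fwdPi F M)) (M ⊗ Rep.ofMulAction R G (FSigma F)) M
      (kerRepι (fwdPi F M)) (fwdPi F M) (kerRepι_injective _) (fwdPi_surj F M hbot)
      (kerRepι_range _) (fun H hH => fwdPi_split F M H hH) (𝟙 M)
    exact ⟨M, FSigma F, inferInstance, FSigma.stab F hconj, β, fwdPi F M, hβ⟩
  · rintro ⟨N, X, inst, hstab, ι, π, hιπ⟩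
    intro A B C i p hinj hsurj hrange hsplit α
    classical
    have hsplit' : ∀ H ∈ F, ∃ s : C.V →ₗ[R] B.V, (∀ c, p.hom (s c) = c) ∧
        ∀ h ∈ H, ∀ c, s (C.ρ h c) = B.ρ h (s c) := hsplit
    have hsec : ∀ q : Quotient (MulAction.orbitRel G X), ∃ s : C.V →ₗ[R] B.V,
        (∀ c, p.hom (s c) = c) ∧ ∀ h ∈ MulAction.stabilizer G q.out, ∀ c,
          s (C.ρ h c) = B.ρ h (s c) :=
      fun q => hsplit' _ (hstab q.out)
    choose sec hsec1 hsec2 using hsec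
    have hxorb : ∀ x : X, ∃ g : G, g • (Quotient.mk (MulAction.orbitRel G X) x).out = x :=
      fun x => MulAction.mem_orbit_iff.mp (MulAction.mem_orbit_symm.mp
        (Quotient.exact (Quotient.out_eq (Quotient.mk (MulAction.orbitRel G X) x))))
    choose g0 hg0 using hxorb
    obtain ⟨β', hβ'⟩ := exists_lift N (π ≫ α) p (TT sec g0)
      (TT_section p sec g0 hsec1) (TT_equivariant sec g0 hsec2 hg0)
    exact ⟨ι ≫ β', by rw [Category.assoc, hβ', ← Category.assoc, hιπ, Category.id_comp]⟩
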